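/- Let μ be a positive Borel measure on ℝⁿ, let σ be a Borel probability measure on ℝⁿ, and let s > 0. Then the upper s-densities of μ∗σ and of μ coincide: E_s⁺(μ∗σ) = E_s⁺(μ). -/

import Mathlib

open MeasureTheory Filter
open scoped ENNReal Pointwise

/-- The upper `s`-density of a positive Borel measure on ℝⁿ:
`E_s⁺(ν) = limsup_{r→∞} sup { ν(U)/(diam U)^s : U compact convex, diam U ≥ r }`. -/
noncomputable def upperSDensity {n : ℕ} (s : ℝ)
    (ν : Measure (EuclideanSpace ℝ (Fin n))) : ℝ≥0∞ :=
  Filter.limsup (fun r : ℝ =>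
    ⨆ (U : Set (EuclideanSpace ℝ (Fin n))) (_ : IsCompact U) (_ : Convex ℝ U)
      (_ : r ≤ Metric.diam U), ν U / EMetric.diam U ^ s) Filter.atTop

/-- The inner supremum appearing in `upperSDensity`. -/
noncomputable def sdSup {n : ℕ} (s : ℝ) (ν : Measure (EuclideanSpace ℝ (Fin n))) (r : ℝ) :
    ℝ≥0∞ :=
  ⨆ (U : Set (EuclideanSpace ℝ (Fin n))) (_ : IsCompact U) (_ : Convex ℝ U)
      (_ : r ≤ Metric.diam U), ν U / EMetric.diam U ^ s

lemma upperSDensity_eq_limsup {n : ℕ} (s : ℝ) (ν : Measure (EuclideanSpace ℝ (Fin n))) :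
    upperSDensity s ν = Filter.limsup (sdSup s ν) Filter.atTop := rfl

lemma le_sdSup {n : ℕ} {s : ℝ} (ν : Measure (EuclideanSpace ℝ (Fin n))) {r : ℝ}
    {U : Set (EuclideanSpace ℝ (Fin n))} (h1 : IsCompact U) (h2 : Convex ℝ U)
    (h3 : r ≤ Metric.diam U) :
    ν U / EMetric.diam U ^ s ≤ sdSup s ν r := by
  refine le_iSup_of_le U ?_
  refine le_iSup_of_le h1 ?_
  refine le_iSup_of_le h2 ?_
  exact le_iSup_of_le h3 le_rfl

lemma sdSup_le {n : ℕ} {s : ℝ} {ν : Measure (EuclideanSpace ℝ (Fin n))} {r : ℝ} {C : ℝ≥0∞}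
    (h : ∀ U : Set (EuclideanSpace ℝ (Fin n)), IsCompact U → Convex ℝ U →
      r ≤ Metric.diam U → ν U / EMetric.diam U ^ s ≤ C) :
    sdSup s ν r ≤ C := by
  refine iSup_le fun U => iSup_le fun h1 => iSup_le fun h2 => iSup_le fun h3 => h U h1 h2 h3

lemma ediam_pos_of_one_le_diam {n : ℕ} {U : Set (EuclideanSpace ℝ (Fin n))} {r : ℝ}
    (hr : 1 ≤ r) (h3 : r ≤ Metric.diam U) : EMetric.diam U ≠ 0 := by
  intro h0
  rw [Metric.diam, show Metric.ediam U = 0 from h0] at h3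
  simp at h3
  linarith

/-- From `sdSup s ν r₀ < C` we get a uniform density bound for sets of diameter `≥ r₀`. -/
lemma bound_of_sdSup_lt {n : ℕ} {s : ℝ} (hs : 0 < s) {ν : Measure (EuclideanSpace ℝ (Fin n))}
    {r₀ : ℝ} {C : ℝ≥0∞} (hr₀ : 1 ≤ r₀) (h : sdSup s ν r₀ < C) :
    ∀ U : Set (EuclideanSpace ℝ (Fin n)), IsCompact U → Convex ℝ U →
      r₀ ≤ Metric.diam U → ν U ≤ C * EMetric.diam U ^ s := by
  intro U h1 h2 h3
  have hlt : ν U / EMetric.diam U ^ s < C := lt_of_le_of_lt (le_sdSup ν h1 h2 h3) h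
  have hne0 : EMetric.diam U ^ s ≠ 0 := by
    intro h0
    rcases ENNReal.rpow_eq_zero_iff.mp h0 with ⟨h', _⟩ | ⟨h', _⟩
    · exact ediam_pos_of_one_le_diam hr₀ h3 h'
    · exact h1.isBounded.ediam_ne_top h'
  have hnetop : EMetric.diam U ^ s ≠ ⊤ :=
    ENNReal.rpow_ne_top_of_nonneg hs.le h1.isBounded.ediam_ne_top
  have := (ENNReal.div_lt_iff (Or.inl hne0) (Or.inl hnetop)).mp hlt
  exact this.le

lemma conv_apply_le_order {n : ℕ} (μ σ : Measure (EuclideanSpace ℝ (Fin n))) [SFinite σ]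
    {V : Set (EuclideanSpace ℝ (Fin n))} (hV : MeasurableSet V) :
    (μ.conv σ) V = ∫⁻ x, σ {y | x + y ∈ V} ∂μ := by
  rw [Measure.conv, Measure.map_apply (by fun_prop) hV, Measure.prod_apply (by
    exact (by fun_prop : Measurable fun p : EuclideanSpace ℝ (Fin n) × EuclideanSpace ℝ (Fin n)
      => p.1 + p.2) hV)]
  rfl

lemma conv_apply_symm_order {n : ℕ} (μ σ : Measure (EuclideanSpace ℝ (Fin n)))
    [SFinite μ] [SFinite σ]
    {V : Set (EuclideanSpace ℝ (Fin n))} (hV : MeasurableSet V) :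
    (μ.conv σ) V = ∫⁻ y, μ {x | x + y ∈ V} ∂σ := by
  rw [Measure.conv, Measure.map_apply (by fun_prop) hV, Measure.prod_apply_symm (by
    exact (by fun_prop : Measurable fun p : EuclideanSpace ℝ (Fin n) × EuclideanSpace ℝ (Fin n)
      => p.1 + p.2) hV)]
  rfl

/-- Translation preserves compactness, convexity and diameter. -/
lemma translate_facts {n : ℕ} {U : Set (EuclideanSpace ℝ (Fin n))} (y : EuclideanSpace ℝ (Fin n))
    (h1 : IsCompact U) (h2 : Convex ℝ U) :
    IsCompact {x | x + y ∈ U} ∧ Convex ℝ {x | x + y ∈ U} ∧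
      EMetric.diam {x | x + y ∈ U} = EMetric.diam U ∧
      Metric.diam {x | x + y ∈ U} = Metric.diam U := by
  have hset : {x | x + y ∈ U} = (fun z => -y + z) '' U := by
    ext x
    simp only [Set.mem_setOf_eq, Set.mem_image]
    constructor
    · intro h; exact ⟨x + y, h, by abel⟩
    · rintro ⟨u, hu, rfl⟩; simpa [add_assoc] using hu
  have hiso : Isometry (fun z : EuclideanSpace ℝ (Fin n) => -y + z) :=
    Isometry.of_dist_eq fun a b => by simp [dist_add_left]
  refine ⟨?_, ?_, ?_, ?_⟩
  · rw [hset]; exact h1.image (by continuity)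
  · rw [hset]; exact h2.translate (-y)
  · rw [hset]; exact hiso.ediam_image U
  · rw [hset]; exact hiso.diam_image U

lemma upperSDensity_subsingleton {s : ℝ} (ν : Measure (EuclideanSpace ℝ (Fin 0))) :
    upperSDensity s ν = 0 := by
  haveI : Subsingleton (EuclideanSpace ℝ (Fin 0)) := ⟨fun a b => by ext i; exact i.elim0⟩
  refine le_antisymm ?_ zero_le
  rw [upperSDensity_eq_limsup]
  refine limsup_le_of_le (by isBoundedDefault) ?_
  filter_upwards [eventually_gt_atTop (0 : ℝ)] with r hr
  refine sdSup_le fun U _ _ h3 => ?_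
  have : Metric.diam U = 0 := Metric.diam_subsingleton fun a _ b _ => Subsingleton.elim a b
  rw [this] at h3
  linarith


theorem upperSDensity_conv {n : ℕ} (s : ℝ) (hs : 0 < s)
    (μ σ : Measure (EuclideanSpace ℝ (Fin n))) [IsProbabilityMeasure σ] :
    upperSDensity s (μ.conv σ) = upperSDensity s μ := by
  rcases Nat.eq_zero_or_pos n with hn | hn
  · subst hn
    rw [upperSDensity_subsingleton, upperSDensity_subsingleton]
  refine le_antisymm ?_ ?_
  · -- `E_s⁺(μ ∗ σ) ≤ E_s⁺(μ)`
    by_cases htop : upperSDensity s μ = ⊤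
    · rw [htop]; exact le_top
    by_contra hlt
    push_neg at hlt
    obtain ⟨C, hC1, hC2⟩ := exists_between (lt_min hlt (Ne.lt_top htop))
    rw [lt_min_iff] at hC2
    obtain ⟨hC2a, hC2top⟩ := hC2
    rw [upperSDensity_eq_limsup] at hC1
    obtain ⟨r₀, hr₀1, hr₀2⟩ :=
      ((eventually_ge_atTop (1 : ℝ)).and (eventually_lt_of_limsup_lt hC1)).exists
    have hbound := bound_of_sdSup_lt hs hr₀1 hr₀2
    have hCne : C ≠ ⊤ := hC2top.ne
    haveI : SigmaFinite μ := by
      constructor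
      constructor
      refine ⟨fun k : ℕ => Metric.closedBall 0 (r₀ + k), fun _ => trivial, ?_, ?_⟩
      · intro k
        have hcc : IsCompact (Metric.closedBall (0 : EuclideanSpace ℝ (Fin n)) (r₀ + k)) :=
          isCompact_closedBall _ _
        have hnn : (0 : ℝ) ≤ r₀ + k := by positivity
        have hdiam : r₀ ≤ Metric.diam (Metric.closedBall (0 : EuclideanSpace ℝ (Fin n)) (r₀ + k)) := by
          set v : EuclideanSpace ℝ (Fin n) :=
            EuclideanSpace.single (⟨0, hn⟩ : Fin n) (r₀ + k) with hv
          have hvn : ‖v‖ = r₀ + k := by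
            rw [hv, EuclideanSpace.norm_single]; exact abs_of_nonneg hnn
          have hmem : v ∈ Metric.closedBall (0 : EuclideanSpace ℝ (Fin n)) (r₀ + k) := by
            rw [mem_closedBall_zero_iff, hvn]
          have hd := Metric.dist_le_diam_of_mem Metric.isBounded_closedBall hmem
            (Metric.mem_closedBall_self hnn)
          rw [dist_zero_right, hvn] at hd
          have : (0:ℝ) ≤ k := k.cast_nonneg
          linarith
        have hb := hbound _ hcc (convex_closedBall _ _) hdiam
        exact lt_of_le_of_lt hb (ENNReal.mul_lt_top hCne.lt_top
          (ENNReal.rpow_ne_top_of_nonneg hs.le hcc.isBounded.ediam_ne_top).lt_top)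
      · rw [Set.iUnion_eq_univ_iff]
        intro x
        obtain ⟨k, hk⟩ := exists_nat_ge ‖x‖
        exact ⟨k, by rw [mem_closedBall_zero_iff]; linarith⟩
    have hconv : ∀ᶠ r in atTop, sdSup s (μ.conv σ) r ≤ C := by
      filter_upwards [eventually_ge_atTop r₀] with r hr
      refine sdSup_le fun U h1 h2 h3 => ?_
      have hmeas : MeasurableSet U := h1.measurableSet
      have hUb : (μ.conv σ) U ≤ C * EMetric.diam U ^ s := by
        rw [conv_apply_symm_order μ σ hmeas]
        calc ∫⁻ y, μ {x | x + y ∈ U} ∂σ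
            ≤ ∫⁻ _, C * EMetric.diam U ^ s ∂σ := by
              refine lintegral_mono fun y => ?_
              obtain ⟨hc1, hc2, hd1, hd2⟩ := translate_facts y h1 h2
              have hb := hbound _ hc1 hc2 (by rw [hd2]; linarith)
              rwa [hd1] at hb
          _ = C * EMetric.diam U ^ s := by rw [lintegral_const, measure_univ, mul_one]
      exact ENNReal.div_le_of_le_mul hUb
    have hfin : upperSDensity s (μ.conv σ) ≤ C := by
      rw [upperSDensity_eq_limsup]
      exact limsup_le_of_le (by isBoundedDefault) hconv
    exact absurd hC2a (not_lt.mpr hfin)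
  · -- `E_s⁺(μ) ≤ E_s⁺(μ ∗ σ)`
    by_cases hconvtop : upperSDensity s (μ.conv σ) = ⊤
    · rw [hconvtop]; exact le_top
    have key : ∀ R : ℕ, upperSDensity s μ * σ (Metric.closedBall 0 (R : ℝ)) ≤
        upperSDensity s (μ.conv σ) := by
      intro R
      set c := σ (Metric.closedBall (0 : EuclideanSpace ℝ (Fin n)) (R : ℝ)) with hcdef
      by_cases hc0 : c = 0
      · rw [hc0, mul_zero]; exact zero_le
      have hcne_top : c ≠ ⊤ := measure_ne_top σ _
      have inner : ∀ C : ℝ≥0∞, upperSDensity s (μ.conv σ) < C → C < ⊤ →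
          upperSDensity s μ * c ≤ C := by
        intro C hC hCtop
        rw [upperSDensity_eq_limsup] at hC
        obtain ⟨r₁, hr₁1, hr₁2⟩ :=
          ((eventually_ge_atTop (1 : ℝ)).and (eventually_lt_of_limsup_lt hC)).exists
        have hbound := bound_of_sdSup_lt hs hr₁1 hr₁2
        have hRnn : (0 : ℝ) ≤ (R : ℝ) := R.cast_nonneg
        have key2 : ∀ r, r₁ ≤ r → ∀ U : Set (EuclideanSpace ℝ (Fin n)),
            IsCompact U → Convex ℝ U → r ≤ Metric.diam U →
            μ U ≤ (C * ENNReal.ofReal (1 + 2 * R / r) ^ s / c) * EMetric.diam U ^ s := by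
          intro r hr U h1 h2 h3
          have hr0 : (0 : ℝ) < r := lt_of_lt_of_le one_pos (le_trans hr₁1 hr)
          set V := U + Metric.closedBall (0 : EuclideanSpace ℝ (Fin n)) (R : ℝ) with hVdef
          have hV1 : IsCompact V := h1.add (isCompact_closedBall _ _)
          have hV2 : Convex ℝ V := h2.add (convex_closedBall _ _)
          have hUV : U ⊆ V := fun u hu =>
            ⟨u, hu, 0, Metric.mem_closedBall_self hRnn, add_zero u⟩
          have hV3 : r₁ ≤ Metric.diam V :=
            le_trans (le_trans hr h3) (Metric.diam_mono hUV hV1.isBounded)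
          have hediamU : EMetric.diam U = ENNReal.ofReal (Metric.diam U) :=
            (ENNReal.ofReal_toReal h1.isBounded.ediam_ne_top).symm
          have hball : EMetric.diam (Metric.closedBall (0 : EuclideanSpace ℝ (Fin n)) (R : ℝ))
              ≤ ENNReal.ofReal (2 * R) := by
            refine EMetric.diam_le fun x hx y hy => ?_
            rw [edist_dist]
            refine ENNReal.ofReal_le_ofReal ?_
            have hx' := Metric.mem_closedBall.mp hx
            have hy' := Metric.mem_closedBall.mp hy
            have h0y : dist (0 : EuclideanSpace ℝ (Fin n)) y = dist y 0 := dist_comm _ _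
            calc dist x y ≤ dist x 0 + dist 0 y := dist_triangle _ _ _
              _ ≤ R + R := by rw [h0y]; exact add_le_add hx' hy'
              _ = 2 * R := by ring
          have hediamV : EMetric.diam V ≤
              ENNReal.ofReal (Metric.diam U) + ENNReal.ofReal (2 * R) := by
            refine EMetric.diam_le ?_
            rintro x ⟨u1, hu1, b1, hb1, rfl⟩ y ⟨u2, hu2, b2, hb2, rfl⟩
            calc edist (u1 + b1) (u2 + b2) ≤ edist u1 u2 + edist b1 b2 :=
                  edist_add_add_le u1 b1 u2 b2
              _ ≤ ENNReal.ofReal (Metric.diam U) + ENNReal.ofReal (2 * R) := by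
                  refine add_le_add ?_ (le_trans (EMetric.edist_le_diam_of_mem hb1 hb2) hball)
                  rw [← hediamU]
                  exact EMetric.edist_le_diam_of_mem hu1 hu2
          have hreal : Metric.diam U + 2 * R ≤ Metric.diam U * (1 + 2 * R / r) := by
            have h1' : r * (2 * R / r) = 2 * R := by field_simp
            have h2' : r * (2 * R / r) ≤ Metric.diam U * (2 * R / r) :=
              mul_le_mul_of_nonneg_right h3 (by positivity)
            rw [h1'] at h2'
            rw [mul_add, mul_one]
            linarith
          have hpow : EMetric.diam V ^ s ≤
              EMetric.diam U ^ s * ENNReal.ofReal (1 + 2 * R / r) ^ s := by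
            calc EMetric.diam V ^ s
                ≤ ENNReal.ofReal (Metric.diam U + 2 * R) ^ s := by
                  refine ENNReal.rpow_le_rpow ?_ hs.le
                  rw [ENNReal.ofReal_add Metric.diam_nonneg (by positivity)]
                  exact hediamV
              _ ≤ ENNReal.ofReal (Metric.diam U * (1 + 2 * R / r)) ^ s :=
                  ENNReal.rpow_le_rpow (ENNReal.ofReal_le_ofReal hreal) hs.le
              _ = (ENNReal.ofReal (Metric.diam U) * ENNReal.ofReal (1 + 2 * R / r)) ^ s := by
                  rw [ENNReal.ofReal_mul Metric.diam_nonneg]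
              _ = EMetric.diam U ^ s * ENNReal.ofReal (1 + 2 * R / r) ^ s := by
                  rw [ENNReal.mul_rpow_of_nonneg _ _ hs.le, ← hediamU]
          have hlow : c * μ U ≤ (μ.conv σ) V := by
            rw [conv_apply_le_order μ σ hV1.measurableSet]
            have hptw : ∀ x, U.indicator (fun _ => c) x ≤ σ {y | x + y ∈ V} := by
              intro x
              by_cases hx : x ∈ U
              · rw [Set.indicator_of_mem hx]
                exact measure_mono fun b hb => ⟨x, hx, b, hb, rfl⟩
              · rw [Set.indicator_of_notMem hx]; exact zero_le
            calc c * μ U = ∫⁻ x, U.indicator (fun _ => c) x ∂μ :=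
                  (lintegral_indicator_const h1.measurableSet c).symm
              _ ≤ _ := lintegral_mono hptw
          have hub : (μ.conv σ) V ≤ C * EMetric.diam V ^ s := hbound V hV1 hV2 hV3
          have hchain : c * μ U ≤
              C * ENNReal.ofReal (1 + 2 * R / r) ^ s * EMetric.diam U ^ s := by
            calc c * μ U ≤ C * EMetric.diam V ^ s := hlow.trans hub
              _ ≤ C * (EMetric.diam U ^ s * ENNReal.ofReal (1 + 2 * R / r) ^ s) :=
                  mul_le_mul_right hpow C
              _ = C * ENNReal.ofReal (1 + 2 * R / r) ^ s * EMetric.diam U ^ s := by ring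
          have hdiv : μ U ≤
              C * ENNReal.ofReal (1 + 2 * R / r) ^ s * EMetric.diam U ^ s / c :=
            (ENNReal.le_div_iff_mul_le (Or.inl hc0) (Or.inl hcne_top)).mpr
              (by rwa [mul_comm] at hchain)
          calc μ U ≤ C * ENNReal.ofReal (1 + 2 * R / r) ^ s * EMetric.diam U ^ s / c := hdiv
            _ = (C * ENNReal.ofReal (1 + 2 * R / r) ^ s / c) * EMetric.diam U ^ s := by
                simp only [div_eq_mul_inv]; exact mul_right_comm _ _ _
        have hA : ∀ r, r₁ ≤ r →
            upperSDensity s μ ≤ C * ENNReal.ofReal (1 + 2 * R / r) ^ s / c := by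
          intro r hr
          rw [upperSDensity_eq_limsup]
          refine limsup_le_of_le (by isBoundedDefault) ?_
          filter_upwards [eventually_ge_atTop r] with r' hr'
          refine sdSup_le fun U h1 h2 h3 => ?_
          exact ENNReal.div_le_of_le_mul (key2 r hr U h1 h2 (le_trans hr' h3))
        have ht : Tendsto (fun r : ℝ => C * ENNReal.ofReal (1 + 2 * R / r) ^ s / c)
            atTop (nhds (C / c)) := by
          have t1 : Tendsto (fun r : ℝ => 1 + 2 * R / r) atTop (nhds 1) := by
            have h0 : Tendsto (fun r : ℝ => 2 * (R : ℝ) / r) atTop (nhds 0) :=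
              Tendsto.div_atTop tendsto_const_nhds tendsto_id
            simpa using tendsto_const_nhds.add h0
          have t2 : Tendsto (fun r : ℝ => ENNReal.ofReal (1 + 2 * R / r)) atTop (nhds 1) := by
            simpa using ENNReal.tendsto_ofReal t1
          have t3 : Tendsto (fun r : ℝ => ENNReal.ofReal (1 + 2 * R / r) ^ s)
              atTop (nhds 1) := by
            have := (ENNReal.continuous_rpow_const (y := s)).tendsto 1
            have := this.comp t2
            simpa [ENNReal.one_rpow, Function.comp_def] using this
          have t4 := ENNReal.Tendsto.const_mul (a := C) t3 (Or.inl one_ne_zero)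
          rw [mul_one] at t4
          have t5 := ENNReal.Tendsto.mul_const (b := c⁻¹) t4
            (Or.inr (ENNReal.inv_ne_top.mpr hc0))
          simpa [div_eq_mul_inv] using t5
        have hEle : upperSDensity s μ ≤ C / c := by
          refine ge_of_tendsto ht ?_
          filter_upwards [eventually_ge_atTop r₁] with r hr
          exact hA r hr
        calc upperSDensity s μ * c ≤ (C / c) * c := mul_le_mul_left hEle c
          _ = C := ENNReal.div_mul_cancel hc0 hcne_top
      by_contra hgt
      push_neg at hgt
      obtain ⟨C, hC1, hC2⟩ := exists_between (lt_min hgt (Ne.lt_top hconvtop))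
      rw [lt_min_iff] at hC2
      exact absurd hC2.1 (not_lt.mpr (inner C hC1 hC2.2))
    have h1 : Tendsto (fun R : ℕ => σ (Metric.closedBall (0 : EuclideanSpace ℝ (Fin n)) (R : ℝ)))
        atTop (nhds 1) := by
      have hmono : Monotone fun R : ℕ =>
          Metric.closedBall (0 : EuclideanSpace ℝ (Fin n)) (R : ℝ) := fun a b hab =>
        Metric.closedBall_subset_closedBall (by exact_mod_cast hab)
      have := tendsto_measure_iUnion_atTop (μ := σ) hmono
      have huniv : (⋃ R : ℕ, Metric.closedBall (0 : EuclideanSpace ℝ (Fin n)) (R : ℝ)) =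
          Set.univ := by
        rw [Set.iUnion_eq_univ_iff]
        intro x
        obtain ⟨k, hk⟩ := exists_nat_ge ‖x‖
        exact ⟨k, by rw [mem_closedBall_zero_iff]; exact hk⟩
      rw [huniv, measure_univ] at this
      exact this
    have h2 : Tendsto (fun R : ℕ => upperSDensity s μ *
        σ (Metric.closedBall (0 : EuclideanSpace ℝ (Fin n)) (R : ℝ))) atTop
        (nhds (upperSDensity s μ * 1)) :=
      ENNReal.Tendsto.const_mul h1 (Or.inl one_ne_zero)
    rw [mul_one] at h2
    exact le_of_tendsto h2 (Eventually.of_forall key)
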